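/- (GPI-style guarantee via FR planning) In the deterministic single-goal setting satisfying the coverage assumption, the converged FRP discount satisfies Γ(s) ≥ max_{π∈Π} F^π(s, s_g) for every state s; i.e., the plan constructed by switching among policies in Π reaches the goal at least as fast as any single policy in Π. -/
import Mathlib


open scoped Classical
open Filter

/-- GPI-style guarantee via FR planning: In the deterministic
single-goal setting, the converged FRP discount satisfies
Γ(s) ≥ max_{π∈Π} F^π(s, s_g) for every state s. -/
theorem frp_ge_gpi {S A : Type*} [Fintype S] [Fintype A] [Nonempty S]
    (γ : ℝ) (hγ0 : 0 < γ) (hγ1 : γ < 1)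
    (ρ : S → A → S) (Pol : Finset (S → A)) (hPol : Pol.Nonempty)
    (sg : S)
    (Fv : (S → A) → S → S → ℝ)
    (hFv : ∀ π s s', Fv π s s' =
      if h : ∃ k : ℕ, (fun x => ρ x (π x))^[k] s = s' then γ ^ Nat.find h else 0)
    (Γ : ℕ → S → ℝ)
    (hΓ1 : ∀ s, Γ 1 s = Pol.sup' hPol fun π => Fv π s sg)
    (hΓ : ∀ k, 1 ≤ k → ∀ s, Γ (k + 1) s =
      (Pol ×ˢ (Finset.univ : Finset S)).sup'
        (hPol.product Finset.univ_nonempty)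
        fun p => Fv p.1 s p.2 * Γ k p.2)
    (Γinf : S → ℝ)
    (hlim : ∀ s, Tendsto (fun k => Γ k s) atTop (nhds (Γinf s))) :
    ∀ s, (Pol.sup' hPol fun π => Fv π s sg) ≤ Γinf s := by
  intro s
  obtain ⟨π0, hπ0⟩ := hPol
  have hFself : ∀ s0 : S, Fv π0 s0 s0 = 1 := by
    intro s0
    rw [hFv]
    have h : ∃ k : ℕ, (fun x => ρ x (π0 x))^[k] s0 = s0 := ⟨0, rfl⟩
    rw [dif_pos h]
    have : Nat.find h = 0 := Nat.le_zero.mp (Nat.find_le rfl)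
    rw [this, pow_zero]
  have key : ∀ k, 1 ≤ k → Γ 1 s ≤ Γ k s := by
    intro k hk
    induction k with
    | zero => omega
    | succ n ih =>
      rcases Nat.eq_or_lt_of_le hk with h | h
      · rw [← h]
      · have hn : 1 ≤ n := by omega
        have h1 := ih hn
        have h2 : Γ n s ≤ Γ (n + 1) s := by
          rw [hΓ n hn s]
          have hmem : (π0, s) ∈ Pol ×ˢ (Finset.univ : Finset S) :=
            Finset.mem_product.mpr ⟨hπ0, Finset.mem_univ s⟩
          calc Γ n s = Fv π0 s s * Γ n s := by rw [hFself, one_mul]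
            _ ≤ _ := Finset.le_sup' (fun p : (S → A) × S => Fv p.1 s p.2 * Γ n p.2) hmem
        linarith
  have : Γ 1 s ≤ Γinf s := by
    refine ge_of_tendsto (hlim s) ?_
    filter_upwards [eventually_ge_atTop 1] with k hk using key k hk
  rw [hΓ1 s] at this
  exact this
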